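/- Let G be a nontrivial finitely generated abelian group. Then there is no surjective group homomorphism from G onto G × G. -/

import Mathlib

/-- Homs from a f.g. additive group into a finite target form a finite type. -/
lemma aux_finite_addMonoidHom (M : Type*) [AddCommGroup M] [AddGroup.FG M]
    (N : Type*) [AddCommMonoid N] [Finite N] : Finite (M →+ N) := by
  obtain ⟨S, hS, hfin⟩ := AddGroup.fg_iff.mp ‹AddGroup.FG M›
  haveI : Finite S := hfin
  refine Finite.of_injective (fun φ : M →+ N => (fun s : S => φ s)) ?_
  intro φ ψ h
  refine AddMonoidHom.eq_of_eqOn_dense hS ?_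
  intro x hx
  exact congrFun h ⟨x, hx⟩

/-- A nontrivial f.g. abelian (additive) group admits a nonzero hom to some `ZMod p`, `p` prime. -/
lemma aux_exists_hom (M : Type*) [AddCommGroup M] [AddGroup.FG M] [Nontrivial M] :
    ∃ (p : ℕ), p.Prime ∧ ∃ φ : M →+ ZMod p, φ ≠ 0 := by
  obtain ⟨n, ι, fι, p, hp, e, ⟨F⟩⟩ := AddCommGroup.equiv_free_prod_directSum_zmod M
  obtain ⟨x, hx⟩ := exists_ne (0 : M)
  have hFx : F x ≠ 0 := fun h => hx (by simpa using F.injective (by simpa using h))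
  by_cases h1 : (F x).1 ≠ 0
  · -- free part is nonzero, map onto ZMod 2 via a coordinate
    obtain ⟨j, -⟩ := Finsupp.ne_iff.mp h1
    refine ⟨2, Nat.prime_two, ?_⟩
    refine ⟨((Int.castRingHom (ZMod 2)).toAddMonoidHom.comp
      ((Finsupp.applyAddHom j).comp
        ((AddMonoidHom.fst _ _).comp F.toAddMonoidHom))), ?_⟩
    intro hzero
    have := DFunLike.congr_fun hzero (F.symm (Finsupp.single j 1, 0))
    simp [AddMonoidHom.comp_apply] at this
  · -- torsion part is nonzero
    push_neg at h1
    have h2 : (F x).2 ≠ 0 := by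
      intro h2
      exact hFx (Prod.ext h1 h2)
    obtain ⟨i, hi⟩ := DFinsupp.ne_iff.mp h2
    have hei : e i ≠ 0 := by
      intro h
      haveI : Subsingleton (ZMod (p i ^ e i)) := by rw [h, pow_zero]; infer_instance
      exact hi (Subsingleton.elim _ _)
    have hdvd : p i ∣ p i ^ e i := dvd_pow_self _ hei
    haveI : Fact (1 < p i) := ⟨(hp i).one_lt⟩
    haveI : DecidableEq ι := Classical.decEq ι
    refine ⟨p i, hp i, ?_⟩
    refine ⟨((ZMod.castHom hdvd (ZMod (p i))).toAddMonoidHom.comp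
      ((DFinsupp.evalAddMonoidHom i).comp
        ((AddMonoidHom.snd _ _).comp F.toAddMonoidHom))), ?_⟩
    intro hzero
    set w : (Fin n →₀ ℤ) × DirectSum ι (fun i => ZMod (p i ^ e i)) :=
      (0, DirectSum.of (fun i => ZMod (p i ^ e i)) i 1) with hw
    have hval : (ZMod.castHom hdvd (ZMod (p i))) ((F (F.symm w)).2 i) = 0 :=
      DFunLike.congr_fun hzero (F.symm w)
    rw [F.apply_symm_apply] at hval
    have hw2 : w.2 i = 1 := DirectSum.of_eq_same i 1
    rw [hw2, map_one] at hval
    exact one_ne_zero hval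

/-- A nontrivial finitely generated abelian group admits no surjective
group homomorphism onto its square `G × G`. -/
theorem no_surjection_onto_square_of_fg_abelian
    (G : Type*) [CommGroup G] [Group.FG G] [Nontrivial G] :
    ¬ ∃ f : G →* G × G, Function.Surjective f := by
  rintro ⟨f, hf⟩
  set M := Additive G
  -- translate to an additive surjection `M →+ M × M`
  let F : M →+ M × M :=
    (AddEquiv.prodAdditive (G := G) (H := G)).toAddMonoidHom.comp (MonoidHom.toAdditive f)
  have hFsurj : Function.Surjective F := by
    exact (AddEquiv.prodAdditive (G := G) (H := G)).surjective.comp hf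
  obtain ⟨p, hp, φ, hφ⟩ := aux_exists_hom M
  haveI : NeZero p := ⟨hp.pos.ne'⟩
  haveI : Finite (ZMod p) := by infer_instance
  haveI : Finite (M →+ ZMod p) := aux_finite_addMonoidHom M (ZMod p)
  -- injection from (M →+ ZMod p) × (M →+ ZMod p) into (M →+ ZMod p)
  let Ψ : (M →+ ZMod p) × (M →+ ZMod p) → (M →+ ZMod p) :=
    fun ab => (ab.1.comp (AddMonoidHom.fst M M) + ab.2.comp (AddMonoidHom.snd M M)).comp F
  have hΨ : Function.Injective Ψ := by
    rintro ⟨a, b⟩ ⟨c, d⟩ h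
    have key : ∀ x : M × M, a x.1 + b x.2 = c x.1 + d x.2 := by
      intro x
      obtain ⟨y, rfl⟩ := hFsurj x
      exact DFunLike.congr_fun h y
    have ha : a = c := by
      ext m
      have := key (Additive.ofMul m, 0)
      simpa using this
    have hb : b = d := by
      ext m
      have := key (0, Additive.ofMul m)
      simpa using this
    rw [ha, hb]
  have hcard : Nat.card ((M →+ ZMod p) × (M →+ ZMod p)) ≤ Nat.card (M →+ ZMod p) :=
    Nat.card_le_card_of_injective Ψ hΨ
  rw [Nat.card_prod] at hcard
  haveI : Nontrivial (M →+ ZMod p) := ⟨φ, 0, hφ⟩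
  have h2 : 1 < Nat.card (M →+ ZMod p) := Finite.one_lt_card
  nlinarith
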